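/- arXiv:2511.02498 — 5 statements merged into one kernel-verified Lean document; each statement's English description precedes it below -/
import Mathlib

section
/- Let K be a field with algebraic closure K̄, let G be a subgroup of K̄^× with G^n ⊆ K^× for a positive integer n coprime to char(K), and suppose the index |GK^×:K^×| is finite. Then the sequence 1 → μ_n(GK^×)K^×/K^× → GK^×/K^× → G^n K^{×n}/K^{×n} → 1 induced by n-th power exponentiation is exact. -/
open Subgroup

noncomputable section

/-- The multiplicative group `K^×` viewed inside `K̄^×`. -/
def KX (K Kbar : Type*) [Field K] [Field Kbar] [Algebra K Kbar] : Subgroup Kbarˣ :=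
  (Units.map (algebraMap K Kbar).toMonoidHom).range

variable (K : Type*) {Kbar : Type*} [Field K] [Field Kbar] [Algebra K Kbar]

/-- The inclusion-induced map `μ_n(GK^×)K^×/K^× → GK^×/K^×` on quotients modulo `K^×`. -/
def leftMap (G : Subgroup Kbarˣ) (n : ℕ) :
    (↥(((powMonoidHom n).ker ⊓ (G ⊔ KX K Kbar)) ⊔ KX K Kbar) ⧸
      ((KX K Kbar).subgroupOf (((powMonoidHom n).ker ⊓ (G ⊔ KX K Kbar)) ⊔ KX K Kbar))) →*
    (↥(G ⊔ KX K Kbar) ⧸ ((KX K Kbar).subgroupOf (G ⊔ KX K Kbar))) :=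
  QuotientGroup.map _ _
    (Subgroup.inclusion (sup_le inf_le_right le_sup_right))
    (fun _ hx => hx)

/-- The `n`-th power map `GK^× → G^n K^{×n}` on subgroups of `K̄^×`. -/
def powHom (G : Subgroup Kbarˣ) (n : ℕ) :
    ↥(G ⊔ KX K Kbar) →* ↥(G.map (powMonoidHom n) ⊔ (KX K Kbar).map (powMonoidHom n)) :=
  ((powMonoidHom n).domRestrict (G ⊔ KX K Kbar)).codRestrict _
    (fun a => by
      have h := Subgroup.mem_map_of_mem (powMonoidHom n) a.2
      rw [Subgroup.map_sup] at h
      exact h)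

/-- The map `GK^×/K^× → G^n K^{×n}/K^{×n}` induced by raising to the `n`-th power. -/
def rightMap (G : Subgroup Kbarˣ) (n : ℕ) :
    (↥(G ⊔ KX K Kbar) ⧸ ((KX K Kbar).subgroupOf (G ⊔ KX K Kbar))) →*
    (↥(G.map (powMonoidHom n) ⊔ (KX K Kbar).map (powMonoidHom n)) ⧸
      (((KX K Kbar).map (powMonoidHom n)).subgroupOf
        (G.map (powMonoidHom n) ⊔ (KX K Kbar).map (powMonoidHom n)))) :=
  QuotientGroup.map _ _ (powHom K G n)
    (fun a ha => by
      rw [Subgroup.mem_comap, Subgroup.mem_subgroupOf]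
      exact Subgroup.mem_map_of_mem (powMonoidHom n) (Subgroup.mem_subgroupOf.mp ha))

/-- Exactness of `1 → μ_n(GK^×)K^×/K^× → GK^×/K^× → G^n K^{×n}/K^{×n} → 1`:
the left (inclusion-induced) map is injective, the range of the left map is the kernel of
the right (n-th power) map, and the right map is surjective. -/
theorem stmt0 [IsAlgClosure K Kbar] (G : Subgroup Kbarˣ) (n : ℕ) (hn : 0 < n)
    (hchar : (n : K) ≠ 0)
    (hG : G.map (powMonoidHom n) ≤ KX K Kbar)
    (hfin : (KX K Kbar).relIndex (G ⊔ KX K Kbar) ≠ 0) :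
    Function.Injective (leftMap K G n) ∧
    MonoidHom.ker (rightMap K G n) = MonoidHom.range (leftMap K G n) ∧
    Function.Surjective (rightMap K G n) := by
  have hcoe : ∀ (y : ↥(G ⊔ KX K Kbar)), ((powHom K G n y : Kbarˣ)) = (y : Kbarˣ) ^ n :=
    fun y => rfl
  refine ⟨?_, ?_, ?_⟩
  · -- injectivity of leftMap
    rw [← MonoidHom.ker_eq_bot_iff, eq_bot_iff]
    intro x hx
    induction x using QuotientGroup.induction_on with
    | H y =>
      rw [MonoidHom.mem_ker, leftMap] at hx
      erw [QuotientGroup.map_mk] at hx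
      rw [QuotientGroup.eq_one_iff,
        mem_subgroupOf, coe_inclusion] at hx
      rw [mem_bot, QuotientGroup.eq_one_iff, mem_subgroupOf]
      exact hx
  · -- ker rightMap = range leftMap
    ext x
    induction x using QuotientGroup.induction_on with
    | H y =>
      simp only [MonoidHom.mem_ker, MonoidHom.mem_range]
      constructor
      · intro h
        rw [rightMap, QuotientGroup.map_mk, QuotientGroup.eq_one_iff, mem_subgroupOf,
          hcoe] at h
        obtain ⟨k, hk0, hkn0⟩ := h
        have hk : k ∈ KX K Kbar := hk0
        have hkn : k ^ n = (y : Kbarˣ) ^ n := hkn0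
        have hzker : ((y : Kbarˣ) * k⁻¹) ∈ (powMonoidHom n).ker := by
          rw [MonoidHom.mem_ker]
          have h1 : (powMonoidHom n) ((y : Kbarˣ) * k⁻¹) = (y : Kbarˣ) ^ n * (k ^ n)⁻¹ := by
            simp [powMonoidHom, mul_pow]
          rw [h1, hkn]
          group
        have hk2 : k ∈ G ⊔ KX K Kbar :=
          (le_sup_right : KX K Kbar ≤ G ⊔ KX K Kbar) hk
        have hk3 : k⁻¹ ∈ G ⊔ KX K Kbar := inv_mem hk2
        have hz : ((y : Kbarˣ) * k⁻¹) ∈ (powMonoidHom n).ker ⊓ (G ⊔ KX K Kbar) :=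
          Subgroup.mem_inf.mpr ⟨hzker, mul_mem y.2 hk3⟩
        have hy' : (y : Kbarˣ) ∈ ((powMonoidHom n).ker ⊓ (G ⊔ KX K Kbar)) ⊔ KX K Kbar := by
          have hrw : (y : Kbarˣ) = ((y : Kbarˣ) * k⁻¹) * k := by group
          rw [hrw]
          exact mul_mem (le_sup_left (α := Subgroup Kbarˣ) hz)
            (le_sup_right (α := Subgroup Kbarˣ) hk)
        refine ⟨QuotientGroup.mk ⟨(y : Kbarˣ), hy'⟩, ?_⟩
        rw [leftMap]
        erw [QuotientGroup.map_mk]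
        congr 1
      · rintro ⟨w, hw⟩
        induction w using QuotientGroup.induction_on with
        | H v =>
          rw [leftMap] at hw
          erw [QuotientGroup.map_mk] at hw
          rw [← hw, rightMap, QuotientGroup.map_mk, QuotientGroup.eq_one_iff, mem_subgroupOf,
            hcoe, coe_inclusion]
          have hv := v.2
          rw [Subgroup.mem_sup] at hv
          obtain ⟨z, hz, k, hk, hzk⟩ := hv
          have hvn : ((v : Kbarˣ)) ^ n = k ^ n := by
            rw [← hzk, mul_pow]
            have h1 : z ^ n = 1 := hz.1
            rw [h1, one_mul]
          rw [hvn]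
          exact ⟨k, hk, rfl⟩
  · -- surjectivity of rightMap
    intro x
    induction x using QuotientGroup.induction_on with
    | H y =>
      have hy := y.2
      rw [Subgroup.mem_sup] at hy
      obtain ⟨a, ha, b, hb, hab⟩ := hy
      obtain ⟨g, hg0, rfl⟩ := ha
      obtain ⟨k, hk0, rfl⟩ := hb
      have hg : g ∈ G := hg0
      have hk : k ∈ KX K Kbar := hk0
      have hg2 : g ∈ G ⊔ KX K Kbar := (le_sup_left : G ≤ G ⊔ KX K Kbar) hg
      refine ⟨QuotientGroup.mk ⟨g, hg2⟩, ?_⟩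
      rw [rightMap, QuotientGroup.map_mk, QuotientGroup.eq]
      rw [mem_subgroupOf]
      have hc : (((powHom K G n ⟨g, hg2⟩)⁻¹ * y : _) : Kbarˣ) = k ^ n := by
        push_cast [hcoe]
        rw [← hab]
        show (g ^ n)⁻¹ * (g ^ n * k ^ n) = k ^ n
        group
      rw [hc]
      exact ⟨k, hk, rfl⟩

end
end

section
/- Let K be a field, K̄ an algebraic closure, G ≤ K̄^× with G^n ⊆ K^× for n coprime to char(K) and |GK^×:K^×| finite. Then |GK^×:K^×| = |G^n K^{×n}:K^{×n}| · |μ_n(GK^×) : μ_n(K^×)|. -/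
open Subgroup

/-- If `G` is a group of radicals over `K` with `G^n ⊆ K^×` (`n` coprime to `char K`) and
finite index `|GK^× : K^×|`, then
`|GK^× : K^×| = |G^n K^{×n} : K^{×n}| ⋅ |μ_n(GK^×) : μ_n(K^×)|`. -/
theorem stmt1 (K Kbar : Type*) [Field K] [Field Kbar] [Algebra K Kbar]
    [IsAlgClosure K Kbar] (G : Subgroup Kbarˣ) (n : ℕ) (hn : 0 < n)
    (hchar : (n : K) ≠ 0)
    (KX : Subgroup Kbarˣ) (hKX : KX = (Units.map (algebraMap K Kbar).toMonoidHom).range)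
    (hG : G.map (powMonoidHom n) ≤ KX)
    (hfin : KX.relIndex (G ⊔ KX) ≠ 0) :
    KX.relIndex (G ⊔ KX) =
      (KX.map (powMonoidHom n)).relIndex
          (G.map (powMonoidHom n) ⊔ KX.map (powMonoidHom n)) *
        ((powMonoidHom n).ker ⊓ KX).relIndex ((powMonoidHom n).ker ⊓ (G ⊔ KX)) := by
  set φ : Kbarˣ →* Kbarˣ := powMonoidHom n
  set N : Subgroup Kbarˣ := φ.ker
  set A : Subgroup Kbarˣ := KX
  set B : Subgroup Kbarˣ := G ⊔ KX with hB
  have hAB : A ≤ B := le_sup_right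
  have hmod : (A ⊔ N) ⊓ B = A ⊔ N ⊓ B := sup_inf_assoc_of_le N hAB
  -- the middle subgroup
  have hAC : A ≤ A ⊔ N ⊓ B := le_sup_left
  have hCB : A ⊔ N ⊓ B ≤ B := sup_le hAB inf_le_right
  have h1 : A.relIndex (A ⊔ N ⊓ B) * (A ⊔ N ⊓ B).relIndex B = A.relIndex B :=
    relIndex_mul_relIndex _ _ _ hAC hCB
  -- second factor: index of the n-th powers
  have h2 : (A ⊔ N ⊓ B).relIndex B = (A.map φ).relIndex (B.map φ) := by
    rw [← hmod, inf_relIndex_right, ← comap_map_eq, relIndex_comap]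
  -- first factor: the roots of unity part
  have h3 : A.relIndex (A ⊔ N ⊓ B) = (N ⊓ A).relIndex (N ⊓ B) := by
    rw [relIndex_sup_left, ← inf_relIndex_right A (N ⊓ B)]
    congr 1
    rw [← inf_assoc, inf_comm A N, inf_assoc, inf_eq_left.mpr hAB]
  have hmap : B.map φ = G.map φ ⊔ A.map φ := by
    rw [hB, Subgroup.map_sup]
  rw [← h1, h2, h3, hmap, mul_comm]
end

section
/- Let K be a field of characteristic 0 such that K ∩ ℚ(ζ_{2^∞}) is totally real, and let w ≥ 2 be such that ξ_{2^w} = ζ_{2^w} + ζ_{2^w}^{-1} ∈ K but ξ_{2^{w+1}} ∉ K. Then −(ξ_{2^w} + 2) is not a square in K^×. -/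
set_option synthInstance.maxHeartbeats 800000 in
/-- Let `K ⊆ ℂ` be such that `K ∩ ℚ(ζ_{2^∞})` is totally real, and let `w ≥ 2` be such
that `ξ_{2^w} = ζ_{2^w} + ζ_{2^w}⁻¹ ∈ K` but `ξ_{2^{w+1}} ∉ K` (here `ζ_{2^w} = ζ²` for a
primitive `2^{w+1}`-th root of unity `ζ`). Then `-(ξ_{2^w} + 2)` is not a square in `K^×`. -/
theorem stmt9 (K : Subfield ℂ) (Q2 : Subfield ℂ)
    (hQ2 : Q2 = Subfield.closure {z : ℂ | ∃ t : ℕ, z ^ 2 ^ t = 1})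
    (htr : ∀ f : ↥(K ⊓ Q2) →+* ℂ, ∀ x : ↥(K ⊓ Q2), (f x).im = 0)
    (w : ℕ) (hw : 2 ≤ w) (ζ : ℂ) (hζ : IsPrimitiveRoot ζ (2 ^ (w + 1)))
    (hξw : ζ ^ 2 + (ζ ^ 2)⁻¹ ∈ K) (hξw1 : ζ + ζ⁻¹ ∉ K) :
    ¬∃ b ∈ K, b ^ 2 = -((ζ ^ 2 + (ζ ^ 2)⁻¹) + 2) := by
  rintro ⟨b, hbK, hb2⟩
  have hζ0 : ζ ≠ 0 := hζ.ne_zero (by positivity)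
  set s : ℂ := ζ + ζ⁻¹ with hs
  set c : ℂ := Complex.I * s with hc
  -- b² = c²
  have hsq : b ^ 2 = c ^ 2 := by
    rw [hb2, hc, hs, mul_pow, Complex.I_sq]
    field_simp
    ring
  have hbc : b = c ∨ b = -c := by
    have h : (b - c) * (b + c) = 0 := by ring_nf; rw [show b ^ 2 = c ^ 2 from hsq]; ring
    rcases mul_eq_zero.1 h with h | h
    · left; linear_combination h
    · right; linear_combination h
  -- s is real
  have habs : ‖ζ‖ = 1 :=
    Complex.norm_eq_one_of_pow_eq_one hζ.pow_eq_one (by positivity)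
  have hconj : ζ⁻¹ = starRingEnd ℂ ζ := Complex.inv_eq_conj habs
  have hsim : s.im = 0 := by
    rw [hs, hconj]
    simp [Complex.add_im]
  -- s ≠ 0
  have hsne : s ≠ 0 := by
    intro h
    have h4 : ζ ^ 4 = 1 := by
      have hζ2 : ζ ^ 2 = -1 := by
        have : ζ * ζ + 1 = 0 := by
          have := h
          rw [hs] at this
          field_simp at this
          linear_combination this
        linear_combination this
      rw [show (4 : ℕ) = 2 * 2 by norm_num, pow_mul, hζ2]
      norm_num
    have hdvd : 2 ^ (w + 1) ∣ 4 := hζ.dvd_of_pow_eq_one 4 h4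
    have : (8 : ℕ) ≤ 2 ^ (w + 1) := by
      calc (8 : ℕ) = 2 ^ 3 := by norm_num
      _ ≤ 2 ^ (w + 1) := Nat.pow_le_pow_right (by norm_num) (by omega)
    have := Nat.le_of_dvd (by norm_num) hdvd
    omega
  -- b ∈ Q2
  have hζQ2 : ζ ∈ Q2 := by
    rw [hQ2]; exact Subfield.subset_closure ⟨w + 1, hζ.pow_eq_one⟩
  have hIQ2 : Complex.I ∈ Q2 := by
    rw [hQ2]
    refine Subfield.subset_closure ⟨2, ?_⟩
    norm_num [pow_succ, Complex.I_sq]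
  have hcQ2 : c ∈ Q2 := Q2.mul_mem hIQ2 (Q2.add_mem hζQ2 (Q2.inv_mem hζQ2))
  have hbQ2 : b ∈ Q2 := by
    rcases hbc with h | h
    · rw [h]; exact hcQ2
    · rw [h]; exact Q2.neg_mem hcQ2
  -- b is real by htr applied to the inclusion
  have hbmem : b ∈ K ⊓ Q2 := ⟨hbK, hbQ2⟩
  have hbim : b.im = 0 := by
    have := htr (K ⊓ Q2).subtype ⟨b, hbmem⟩
    simpa using this
  -- but b = ± I * s with s real nonzero
  have hsre : s.re ≠ 0 := by
    intro h
    exact hsne (Complex.ext h hsim)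
  have hcim : c.im = s.re := by
    rw [hc]
    simp [Complex.mul_im, Complex.I_re, Complex.I_im, hsim]
  rcases hbc with h | h
  · rw [h, hcim] at hbim; exact hsre hbim
  · rw [h, Complex.neg_im, hcim] at hbim
    exact hsre (by linarith)
end

section
/- Let K be a field of odd characteristic with ζ₄ ∉ K, and let w ≥ 2 be such that ξ_{2^w} = ζ_{2^w}+ζ_{2^w}^{-1} ∈ K^× but ξ_{2^{w+1}} ∉ K^×. Then −(ξ_{2^w}+2) is a square in K^×. -/
set_option synthInstance.maxHeartbeats 1000000
set_option maxHeartbeats 1000000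

open IntermediateField Polynomial

lemma aux_mul_nonsq {F : Type*} [Field F] [Fintype F] [DecidableEq F]
    {a b : F} (ha : ¬IsSquare a) (hb : ¬IsSquare b) : IsSquare (a * b) := by
  have ha0 : a ≠ 0 := fun h => ha (h ▸ (IsSquare.zero))
  have hb0 : b ≠ 0 := fun h => hb (h ▸ (IsSquare.zero))
  refine (quadraticChar_one_iff_isSquare (mul_ne_zero ha0 hb0)).mp ?_
  rw [map_mul, quadraticChar_neg_one_iff_not_isSquare.mpr ha,
    quadraticChar_neg_one_iff_not_isSquare.mpr hb]
  norm_num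

/-- Let `K` be a field of odd characteristic with `ζ₄ ∉ K`, and `w ≥ 2` with
`ξ_{2^w} = ζ_{2^w} + ζ_{2^w}⁻¹ ∈ K^×` but `ξ_{2^{w+1}} ∉ K^×` (where `ζ_{2^w} = ζ²` for a
primitive `2^{w+1}`-th root of unity `ζ` in `K̄`). Then `-(ξ_{2^w} + 2)` is a square in `K^×`. -/
theorem stmt10 (K Kbar : Type*) [Field K] [Field Kbar] [Algebra K Kbar]
    [IsAlgClosure K Kbar]
    (p : ℕ) (hp : p.Prime) [CharP K p] (hp2 : p ≠ 2)
    (hζ4 : ¬∃ i : K, i ^ 2 = -1)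
    (w : ℕ) (hw : 2 ≤ w) (ζ : Kbar) (hζ : IsPrimitiveRoot ζ (2 ^ (w + 1)))
    (hξw : ζ ^ 2 + (ζ ^ 2)⁻¹ ∈ (algebraMap K Kbar).range)
    (hξw1 : ζ + ζ⁻¹ ∉ (algebraMap K Kbar).range) :
    ∃ b : K, algebraMap K Kbar b ^ 2 = -((ζ ^ 2 + (ζ ^ 2)⁻¹) + 2) := by
  classical
  haveI : Fact p.Prime := ⟨hp⟩
  obtain ⟨x, hx⟩ := hξw
  have hinj : Function.Injective (algebraMap K Kbar) := (algebraMap K Kbar).injective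
  have hζ0 : ζ ≠ 0 := hζ.ne_zero (by positivity)
  letI : Algebra (ZMod p) K := ZMod.algebra K p
  letI : Algebra (ZMod p) Kbar := ((algebraMap K Kbar).comp (algebraMap (ZMod p) K)).toAlgebra
  haveI : IsScalarTower (ZMod p) K Kbar := IsScalarTower.of_algebraMap_eq fun r => rfl
  -- ζ is integral over ZMod p
  have hζint : IsIntegral (ZMod p) ζ := by
    refine ⟨X ^ (2 ^ (w + 1)) - C 1, by simpa using monic_X_pow_sub_C (1 : ZMod p) (by positivity), ?_⟩
    simp [eval₂, hζ.pow_eq_one]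
  have hζinv : ζ⁻¹ = ζ ^ (2 ^ (w + 1) - 1) := by
    field_simp
    rw [← pow_succ']
    have h1 : 2 ^ (w + 1) - 1 + 1 = 2 ^ (w + 1) := Nat.succ_pred_eq_of_pos (pow_pos (by norm_num) _)
    rw [h1, hζ.pow_eq_one]
  have hxint : IsIntegral (ZMod p) x := by
    rw [← isIntegral_algebraMap_iff hinj, hx]
    have h1 : IsIntegral (ZMod p) (ζ ^ 2) := hζint.pow 2
    have h2 : IsIntegral (ZMod p) ((ζ ^ 2)⁻¹) := by
      rw [← inv_pow, hζinv, ← pow_mul]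
      exact hζint.pow _
    exact h1.add h2
  -- the finite field
  haveI := IntermediateField.adjoin.finiteDimensional hxint
  set F := (ZMod p)⟮x⟯
  haveI : Finite F := Module.finite_of_finite (ZMod p)
  haveI : Fintype F := Fintype.ofFinite _
  haveI : CharP F p :=
    charP_of_injective_ringHom (algebraMap (ZMod p) F).injective p
  have hchar : ringChar F ≠ 2 := by
    rw [ringChar.eq F p]; exact hp2
  have hxmem : x ∈ F := IntermediateField.mem_adjoin_simple_self _ x
  set x' : F := ⟨x, hxmem⟩ with hx'
  have hx'K : algebraMap F K x' = x := rfl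
  -- -1 is not a square in F
  have hns1 : ¬IsSquare (-1 : F) := by
    rintro ⟨c, hc⟩
    have h := congrArg (algebraMap F K) hc
    rw [map_neg, map_one, map_mul] at h
    exact hζ4 ⟨algebraMap F K c, by rw [sq, ← h]⟩
  -- x + 2 is not a square in F
  have hns2 : ¬IsSquare (x' + 2 : F) := by
    rintro ⟨c, hc⟩
    have h := congrArg (algebraMap F K) hc
    rw [map_add, map_mul, map_ofNat, hx'K] at h
    have hcK : (algebraMap F K c) ^ 2 = x + 2 := by rw [sq, ← h]
    have h2 : (algebraMap K Kbar (algebraMap F K c)) ^ 2 = (ζ + ζ⁻¹) ^ 2 := by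
      rw [← map_pow, hcK, map_add, map_ofNat, hx]
      field_simp
      ring
    rcases (Commute.all _ _).sq_eq_sq_iff_eq_or_eq_neg.mp h2 with h3 | h3
    · exact hξw1 ⟨algebraMap F K c, h3⟩
    · exact hξw1 ⟨-(algebraMap F K c), by rw [map_neg, h3, neg_neg]⟩
  obtain ⟨d, hd⟩ := aux_mul_nonsq hns1 hns2
  refine ⟨algebraMap F K d, ?_⟩
  have hdK : (algebraMap F K d) ^ 2 = -(x + 2) := by
    have h := congrArg (algebraMap F K) hd
    rw [map_mul, map_mul, map_neg, map_one, map_add, map_ofNat, hx'K, neg_one_mul] at h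
    rw [sq, ← h]
  rw [← map_pow, hdK, map_neg, map_add, map_ofNat, hx]
end

section
/- Let K be a field and a ∈ K^×, n ≥ 1 not divisible by char(K). The extension K(ζ_n, a^{1/n})/K is abelian if and only if there exist m | n with ζ_m ∈ K and b ∈ K^× such that a^m = b^n. (Schinzel's theorem on abelian radical extensions.) -/
open IntermediateField Polynomial

set_option synthInstance.maxHeartbeats 1000000
set_option maxHeartbeats 4000000

-- Bezout for finset gcd over ℤ
private lemma finset_gcd_bezout {α : Type*} [DecidableEq α] (S : Finset α) (f : α → ℤ) :
    ∃ c : α → ℤ, (S.gcd f : ℤ) = ∑ σ ∈ S, c σ * f σ := by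
  classical
  induction S using Finset.induction_on with
  | empty => exact ⟨0, by simp⟩
  | insert a S ha ih =>
    obtain ⟨c, hc⟩ := ih
    refine ⟨fun t => if t = a then Int.gcdA (f a) (S.gcd f) else Int.gcdB (f a) (S.gcd f) * c t, ?_⟩
    rw [Finset.gcd_insert, ← Int.coe_gcd, Int.gcd_eq_gcd_ab, Finset.sum_insert ha]
    have hne : ∀ t ∈ S, (if t = a then Int.gcdA (f a) (S.gcd f) else Int.gcdB (f a) (S.gcd f) * c t)
        * f t = Int.gcdB (f a) (S.gcd f) * (c t * f t) := by
      intro t ht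
      rw [if_neg (fun h : t = a => ha (h ▸ ht))]
      ring
    rw [Finset.sum_congr rfl hne, ← Finset.mul_sum, ← hc]
    simp only [if_true, eq_self_iff_true]
    ring

/-- Schinzel's theorem on abelian radical extensions: for `a ∈ K^×` and `n ≥ 1` not
divisible by `char K`, the (Galois) extension `K(ζ_n, a^{1/n})/K` is abelian if and only
if `a^m = b^n` for some `b ∈ K^×` and some `m ∣ n` with `ζ_m ∈ K`. -/
theorem stmt18 (K Kbar : Type*) [Field K] [Field Kbar] [Algebra K Kbar]
    [IsAlgClosure K Kbar]
    (n : ℕ) (hn : 1 ≤ n) (hchar : (n : K) ≠ 0)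
    (a : K) (ha : a ≠ 0)
    (ζ : Kbar) (hζ : IsPrimitiveRoot ζ n)
    (r : Kbar) (hr : r ^ n = algebraMap K Kbar a) :
    (∀ σ τ : (IntermediateField.adjoin K ({ζ, r} : Set Kbar)) ≃ₐ[K]
        (IntermediateField.adjoin K ({ζ, r} : Set Kbar)), σ * τ = τ * σ) ↔
      ∃ m : ℕ, m ∣ n ∧ (∃ ζm : K, IsPrimitiveRoot ζm m) ∧ ∃ b : K, a ^ m = b ^ n := by
  classical
  have hn0 : n ≠ 0 := by omega
  haveI : NeZero n := ⟨hn0⟩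
  haveI halgKbar : Algebra.IsAlgebraic K Kbar := IsAlgClosure.isAlgebraic
  set F : IntermediateField K Kbar := IntermediateField.adjoin K ({ζ, r} : Set Kbar) with hF
  have hζF : ζ ∈ F := IntermediateField.subset_adjoin K _ (by simp)
  have hrF : r ∈ F := IntermediateField.subset_adjoin K _ (by simp)
  set z : F := ⟨ζ, hζF⟩ with hzdef
  set w : F := ⟨r, hrF⟩ with hwdef
  have hζ' : IsPrimitiveRoot z n := hζ.of_map_of_injective (f := F.val) (Subtype.val_injective)
  have hz0 : z ≠ 0 := hζ'.ne_zero hn0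
  have hw : w ^ n = algebraMap K F a := by
    apply Subtype.ext
    push_cast
    exact hr
  have hιinj : Function.Injective (algebraMap K F) := (algebraMap K F).injective
  have hw0 : w ≠ 0 := by
    intro h
    apply ha
    apply hιinj
    rw [map_zero, ← hw, h, zero_pow hn0]
  -- generators
  have htop : Algebra.adjoin K ({z, w} : Set F) = ⊤ := by
    apply Subalgebra.map_injective (f := F.val) Subtype.val_injective
    rw [AlgHom.map_adjoin, Algebra.map_top, IntermediateField.range_val]
    have himg : F.val '' ({z, w} : Set F) = ({ζ, r} : Set Kbar) := by
      simp [Set.image_insert_eq]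
      rfl
    rw [himg, hF]
    exact (IntermediateField.adjoin_toSubalgebra_of_isAlgebraic
      (fun x _ => Algebra.IsAlgebraic.isAlgebraic x)).symm
  have ext_zw : ∀ σ τ : F ≃ₐ[K] F, σ z = τ z → σ w = τ w → σ = τ := by
    intro σ τ h1 h2
    apply AlgEquiv.ext
    intro v
    have hv : v ∈ Algebra.adjoin K ({z, w} : Set F) := htop ▸ Algebra.mem_top
    induction hv using Algebra.adjoin_induction with
    | mem y hy => rcases hy with rfl | rfl
                  · exact h1
                  · exact h2
    | algebraMap c => rw [AlgEquiv.commutes, AlgEquiv.commutes]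
    | add u v hu hv hu' hv' => rw [map_add, map_add, hu', hv']
    | mul u v hu hv hu' hv' => rw [map_mul, map_mul, hu', hv']
  -- Galois
  haveI hFD : FiniteDimensional K F := by
    apply IntermediateField.finiteDimensional_adjoin
    intro v _
    exact (Algebra.IsAlgebraic.isAlgebraic v).isIntegral
  haveI hGal : IsGalois K F := by
    have hsf : IsSplittingField K F (X ^ n - C a) := by
      constructor
      · show Splits ((X ^ n - C a).map (algebraMap K F))
        have : (X ^ n - C a).map (algebraMap K F) = X ^ n - C (algebraMap K F a) := by
          simp
        rw [this, ← hw]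
        exact X_pow_sub_C_splits_of_isPrimitiveRoot hζ' rfl
      · rw [eq_top_iff, ← htop, Algebra.adjoin_le_iff]
        have hp0 : (X ^ n - C a : K[X]) ≠ 0 := X_pow_sub_C_ne_zero (by omega) a
        have hwmem : w ∈ (X ^ n - C a : K[X]).rootSet F := by
          rw [mem_rootSet]
          refine ⟨hp0, ?_⟩
          simp [hw]
        have hzwmem : z * w ∈ (X ^ n - C a : K[X]).rootSet F := by
          rw [mem_rootSet]
          refine ⟨hp0, ?_⟩
          simp [mul_pow, hζ'.pow_eq_one, hw]
        rintro v (rfl | rfl)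
        · have hzeq : z = (z * w) * w ^ (n - 1) * algebraMap K F a⁻¹ := by
            have hwn : w * w ^ (n - 1) = w ^ n := by
              rw [← pow_succ']
              congr 1
              omega
            calc z = z * ((w * w ^ (n-1)) * algebraMap K F a⁻¹) := by
                    rw [hwn, hw, ← map_mul, mul_inv_cancel₀ ha, map_one, mul_one]
              _ = (z * w) * w ^ (n - 1) * algebraMap K F a⁻¹ := by ring
          rw [hzeq]
          exact mul_mem (mul_mem (Algebra.subset_adjoin hzwmem)
            (pow_mem (Algebra.subset_adjoin hwmem) _)) (Subalgebra.algebraMap_mem _ _)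
        · exact Algebra.subset_adjoin hwmem
    exact IsGalois.of_separable_splitting_field (separable_X_pow_sub_C a hchar ha)
  have fixed_mem : ∀ β : F, (∀ σ : F ≃ₐ[K] F, σ β = β) → ∃ b : K, algebraMap K F b = β := by
    intro β hβ
    have hmem : β ∈ IntermediateField.fixedField (⊤ : Subgroup (F ≃ₐ[K] F)) :=
      fun g => hβ g
    rw [((IsGalois.tfae.out 0 1).mp hGal : IntermediateField.fixedField ⊤ = ⊥)] at hmem
    exact IntermediateField.mem_bot.mp hmem
  -- choice of exponents
  have hs' : ∀ σ : F ≃ₐ[K] F, ∃ s : ℕ, σ z = z ^ s := by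
    intro σ
    have h1 : (σ z) ^ n = 1 := by rw [← map_pow, hζ'.pow_eq_one, map_one]
    obtain ⟨i, -, hi⟩ := hζ'.eq_pow_of_pow_eq_one h1
    exact ⟨i, hi.symm⟩
  have hx' : ∀ σ : F ≃ₐ[K] F, ∃ x : ℕ, σ w = z ^ x * w := by
    intro σ
    have h1 : (σ w * w⁻¹) ^ n = 1 := by
      rw [mul_pow, ← map_pow, hw, AlgEquiv.commutes, inv_pow, hw, mul_inv_cancel₀]
      exact fun h => ha (hιinj (by rw [map_zero, h]))
    obtain ⟨i, -, hi⟩ := hζ'.eq_pow_of_pow_eq_one h1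
    refine ⟨i, ?_⟩
    rw [hi, inv_mul_cancel_right₀ hw0]
  choose s hs using hs'
  choose x hx using hx'
  have hzpow : ∀ i j : ℤ, z ^ i = z ^ j ↔ (n : ℤ) ∣ (i - j) := by
    intro i j
    rw [← hζ'.zpow_eq_one_iff_dvd, zpow_sub₀ hz0, div_eq_one_iff_eq (zpow_ne_zero _ hz0)]
  have key : ∀ σ τ : F ≃ₐ[K] F, σ * τ = τ * σ ↔
      (n : ℤ) ∣ (x τ : ℤ) * ((s σ : ℤ) - 1) - (x σ : ℤ) * ((s τ : ℤ) - 1) := by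
    intro σ τ
    have hz1 : (σ * τ) z = z ^ (s σ * s τ) := by
      rw [AlgEquiv.mul_apply, hs τ, map_pow, hs σ, ← pow_mul]
    have hz2 : (τ * σ) z = z ^ (s σ * s τ) := by
      rw [AlgEquiv.mul_apply, hs σ, map_pow, hs τ, ← pow_mul, mul_comm]
    have hw1 : (σ * τ) w = z ^ (s σ * x τ + x σ) * w := by
      rw [AlgEquiv.mul_apply, hx τ, map_mul, map_pow, hs σ, hx σ, ← pow_mul, ← mul_assoc,
        ← pow_add]
    have hw2 : (τ * σ) w = z ^ (s τ * x σ + x τ) * w := by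
      rw [AlgEquiv.mul_apply, hx σ, map_mul, map_pow, hs τ, hx τ, ← pow_mul, ← mul_assoc,
        ← pow_add]
    constructor
    · intro h
      have heq : z ^ (s σ * x τ + x σ) * w = z ^ (s τ * x σ + x τ) * w := by
        rw [← hw1, ← hw2, h]
      have hzz : (z : F) ^ ((s σ * x τ + x σ : ℕ) : ℤ) = z ^ ((s τ * x σ + x τ : ℕ) : ℤ) := by
        rw [zpow_natCast, zpow_natCast]
        exact mul_right_cancel₀ hw0 heq
      have hd := (hzpow _ _).mp hzz
      convert hd using 1
      push_cast
      ring
    · intro h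
      apply ext_zw
      · rw [hz1, hz2]
      · rw [hw1, hw2]
        congr 1
        rw [← zpow_natCast z, ← zpow_natCast z]
        apply (hzpow _ _).mpr
        convert h using 1
        push_cast
        ring
  constructor
  · intro hab
    set g : ℤ := Finset.univ.gcd (fun σ : F ≃ₐ[K] F => (s σ : ℤ) - 1) with hg
    set m : ℕ := Int.gcd (n : ℤ) g with hmdef
    have hmz : ((m : ℤ)) ∣ (n : ℤ) := Int.gcd_dvd_left _ _
    have hmdvdn : m ∣ n := Int.ofNat_dvd.mp hmz
    have hmdvds : ∀ σ : F ≃ₐ[K] F, (m : ℤ) ∣ (s σ : ℤ) - 1 := fun σ =>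
      dvd_trans (Int.gcd_dvd_right _ _) (Finset.gcd_dvd (Finset.mem_univ σ))
    have hm0 : m ≠ 0 := fun h => hn0 (Nat.eq_zero_of_zero_dvd (h ▸ hmdvdn))
    obtain ⟨d, hd⟩ := hmdvdn
    have hmdvdn : m ∣ n := ⟨d, hd⟩
    have hnm : ((n : ℤ)) = (m : ℤ) * (d : ℤ) := by exact_mod_cast hd
    have hfix : ∀ σ : F ≃ₐ[K] F, σ (z ^ d) = z ^ d := by
      intro σ
      rw [map_pow, hs σ, ← pow_mul, ← zpow_natCast z (s σ * d), ← zpow_natCast z d]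
      apply (hzpow _ _).mpr
      obtain ⟨t, ht⟩ := hmdvds σ
      refine ⟨t, ?_⟩
      have h1 : ((s σ * d : ℕ) : ℤ) - (d : ℕ) = (d : ℤ) * ((s σ : ℤ) - 1) := by
        push_cast
        ring
      rw [h1, ht, hnm]
      ring
    obtain ⟨ζm, hζmval⟩ := fixed_mem _ hfix
    obtain ⟨c, hc⟩ := finset_gcd_bezout (Finset.univ) (fun σ : F ≃ₐ[K] F => (s σ : ℤ) - 1)
    rw [← hg] at hc
    set A := Int.gcdA (n : ℤ) g with hA
    set B := Int.gcdB (n : ℤ) g with hB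
    have hmeq : (m : ℤ) = (n : ℤ) * A + g * B := Int.gcd_eq_gcd_ab (n : ℤ) g
    set y : ℤ := B * ∑ σ : F ≃ₐ[K] F, c σ * x σ with hy
    have hyd : ∀ τ : F ≃ₐ[K] F, (n : ℤ) ∣ (m : ℤ) * x τ - ((s τ : ℤ) - 1) * y := by
      intro τ
      have h1 : (n : ℤ) ∣ ∑ σ : F ≃ₐ[K] F,
          c σ * (((s σ : ℤ) - 1) * x τ - ((s τ : ℤ) - 1) * x σ) := by
        apply Finset.dvd_sum
        intro σ _
        apply Dvd.dvd.mul_left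
        have hd := (key σ τ).mp (hab σ τ)
        show (n : ℤ) ∣ _
        convert hd using 1
        ring
      obtain ⟨k, hk⟩ := h1
      refine ⟨A * x τ + B * k, ?_⟩
      have hgx : g * (x τ : ℤ) - ((s τ : ℤ) - 1) * (∑ σ : F ≃ₐ[K] F, c σ * x σ) =
          ∑ σ : F ≃ₐ[K] F, c σ * (((s σ : ℤ) - 1) * x τ - ((s τ : ℤ) - 1) * x σ) := by
        rw [hc, Finset.sum_mul, Finset.mul_sum, ← Finset.sum_sub_distrib]
        apply Finset.sum_congr rfl
        intro σ _
        ring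
      have : (m : ℤ) * x τ - ((s τ : ℤ) - 1) * y =
          (n : ℤ) * (A * x τ) + B * (g * (x τ : ℤ) -
            ((s τ : ℤ) - 1) * (∑ σ : F ≃ₐ[K] F, c σ * x σ)) := by
        rw [hmeq, hy]
        ring
      rw [this, hgx, hk]
      ring
    have hfixb : ∀ σ : F ≃ₐ[K] F, σ (z ^ (-y) * w ^ m) = z ^ (-y) * w ^ m := by
      intro σ
      rw [map_mul, map_zpow₀, hs σ, map_pow, hx σ, mul_pow, ← pow_mul,
        ← zpow_natCast z (s σ), ← zpow_mul, ← zpow_natCast z (x σ * m), ← mul_assoc,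
        ← zpow_add₀ hz0]
      congr 1
      apply (hzpow _ _).mpr
      obtain ⟨k, hk⟩ := hyd σ
      refine ⟨k, ?_⟩
      push_cast
      rw [← hk]
      ring
    obtain ⟨b, hb⟩ := fixed_mem _ hfixb
    refine ⟨m, hmdvdn, ?_, b, ?_⟩
    · have hprim : IsPrimitiveRoot (z ^ d) m :=
        IsPrimitiveRoot.pow (Nat.pos_of_ne_zero hn0) hζ'
          (by rw [hd, Nat.mul_comm])
      rw [← hζmval] at hprim
      exact ⟨ζm, hprim.of_map_of_injective hιinj⟩
    · apply hιinj
      rw [map_pow, map_pow, hb, mul_pow, ← pow_mul, Nat.mul_comm m n, pow_mul, hw,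
        ← zpow_natCast (z ^ (-y)) n, ← zpow_mul,
        show (-y) * (n : ℤ) = (n : ℤ) * (-y) by ring, zpow_mul, hζ'.zpow_eq_one, one_zpow,
        one_mul]
  · rintro ⟨m, hmn, ⟨ζm, hζm⟩, b, habm⟩ σ τ
    have hm0 : m ≠ 0 := fun h => hn0 (Nat.eq_zero_of_zero_dvd (h ▸ hmn))
    haveI : NeZero m := ⟨hm0⟩
    obtain ⟨d, hd⟩ := hmn
    have hb0 : b ≠ 0 := by
      intro h
      apply ha
      have hzero : a ^ m = 0 := by rw [habm, h, zero_pow hn0]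
      exact (pow_eq_zero_iff hm0).mp hzero
    have hib0 : algebraMap K F b ≠ 0 := fun h => hb0 (hιinj (by rw [map_zero, h]))
    rw [key]
    -- m divides s ρ - 1 for every ρ
    have hmd : ∀ ρ : F ≃ₐ[K] F, (m : ℤ) ∣ (s ρ : ℤ) - 1 := by
      intro ρ
      have hzm : IsPrimitiveRoot (algebraMap K F ζm) m := hζm.map_of_injective hιinj
      have h1 : (z ^ d) ^ m = 1 := by
        rw [← pow_mul, Nat.mul_comm d m, ← hd, hζ'.pow_eq_one]
      obtain ⟨t, -, ht⟩ := hzm.eq_pow_of_pow_eq_one h1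
      have h2 : ρ (z ^ d) = z ^ d := by
        rw [← ht, ← map_pow (algebraMap K F), AlgEquiv.commutes]
      rw [map_pow, hs ρ, ← pow_mul] at h2
      rw [← zpow_natCast z (s ρ * d), ← zpow_natCast z d] at h2
      have h3 := (hzpow _ _).mp h2
      have hd0 : (d : ℤ) ≠ 0 := by
        intro h
        apply hn0
        rw [hd]
        have : d = 0 := by exact_mod_cast h
        rw [this, Nat.mul_zero]
      have h4 : (d : ℤ) * (m : ℤ) ∣ (d : ℤ) * ((s ρ : ℤ) - 1) := by
        have hcast : ((s ρ * d : ℕ) : ℤ) - (d : ℕ) = (d : ℤ) * ((s ρ : ℤ) - 1) := by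
          push_cast
          ring
        rw [← hcast]
        have hnd : (n : ℤ) = (d : ℤ) * (m : ℤ) := by
          rw [hd]
          push_cast
          ring
        rw [← hnd]
        exact h3
      exact (mul_dvd_mul_iff_left hd0).mp h4
    -- the root of unity k with w^m = z^k * b
    have hbe : (w ^ m * (algebraMap K F b)⁻¹) ^ n = 1 := by
      rw [mul_pow, ← pow_mul, Nat.mul_comm m n, pow_mul, hw, inv_pow, ← map_pow, habm,
        map_pow, mul_inv_cancel₀ (pow_ne_zero _ hib0)]
    obtain ⟨k, -, hk⟩ := hζ'.eq_pow_of_pow_eq_one hbe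
    have hwm : w ^ m = z ^ k * algebraMap K F b := by
      rw [hk, inv_mul_cancel_right₀ hib0]
    have hkd : ∀ ρ : F ≃ₐ[K] F, (n : ℤ) ∣ (m : ℤ) * x ρ - (k : ℤ) * ((s ρ : ℤ) - 1) := by
      intro ρ
      have h2 := congrArg ρ hwm
      rw [map_pow, hx ρ, map_mul, map_pow, hs ρ, AlgEquiv.commutes, mul_pow, ← pow_mul,
        ← pow_mul, hwm, ← mul_assoc, ← pow_add] at h2
      have h5 : (z : F) ^ ((x ρ * m + k : ℕ) : ℤ) = z ^ ((s ρ * k : ℕ) : ℤ) := by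
        rw [zpow_natCast, zpow_natCast]
        exact mul_right_cancel₀ hib0 h2
      have h6 := (hzpow _ _).mp h5
      convert h6 using 1
      push_cast
      ring
    obtain ⟨uσ, huσ⟩ := hmd σ
    obtain ⟨uτ, huτ⟩ := hmd τ
    have H := ((hkd τ).mul_left uσ).sub ((hkd σ).mul_left uτ)
    replace H : (n : ℤ) ∣ _ := H
    convert H using 1
    rw [huσ, huτ]
    ring
end
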